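/- If a permutation class C contains arbitrarily long alternations (vertical or horizontal), then |C_n| ≥ 2^{n−1} for all n ≥ 1. -/

import Mathlib

/-- `σ ≤ π`: the permutation `π` contains the pattern `σ`, i.e. `π` has a subsequence
in the same relative order as `σ`. -/
def PermContains {k n : ℕ} (σ : Equiv.Perm (Fin k)) (π : Equiv.Perm (Fin n)) : Prop :=
  ∃ f : Fin k → Fin n, StrictMono f ∧ ∀ i j : Fin k, σ i < σ j ↔ π (f i) < π (f j)

/-- A permutation class: a set of permutations (of each length) closed downward
under the containment order. -/
def IsPermClass (C : ∀ n : ℕ, Set (Equiv.Perm (Fin n))) : Prop :=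
  ∀ (k n : ℕ) (σ : Equiv.Perm (Fin k)) (π : Equiv.Perm (Fin n)),
    π ∈ C n → PermContains σ π → σ ∈ C k
/-- A vertical alternation: a permutation of even length `n = 2m` such that either every
value in an odd position is smaller than every value in an even position, or vice versa
(positions here are 0-indexed, so "odd positions" are those with index `≡ 0 mod 2`). -/
def IsVerticalAlternation {n : ℕ} (π : Equiv.Perm (Fin n)) : Prop :=
  (∃ m : ℕ, n = 2 * m) ∧
    ((∀ i j : Fin n, (i : ℕ) % 2 = 0 → (j : ℕ) % 2 = 1 → π i < π j) ∨
     (∀ i j : Fin n, (i : ℕ) % 2 = 0 → (j : ℕ) % 2 = 1 → π j < π i))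

/-- The class `C` contains arbitrarily long alternations (vertical or horizontal, a
horizontal alternation being the inverse of a vertical one). -/
def ContainsArbitrarilyLongAlternations (C : ∀ n : ℕ, Set (Equiv.Perm (Fin n))) : Prop :=
  ∀ m : ℕ, ∃ (n : ℕ) (π : Equiv.Perm (Fin n)), π ∈ C n ∧ m ≤ n ∧
    (IsVerticalAlternation π ∨ IsVerticalAlternation π⁻¹)

lemma exists_standardization {n : ℕ} {α : Type*} [LinearOrder α] (g : Fin n → α)
    (hg : Function.Injective g) :
    ∃ σ : Equiv.Perm (Fin n), ∀ i j, σ i < σ j ↔ g i < g j := by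
  classical
  set t : Finset α := Finset.univ.image g with ht
  have hcard : t.card = n := by
    rw [ht, Finset.card_image_of_injective _ hg, Finset.card_univ, Fintype.card_fin]
  let e := t.orderIsoOfFin hcard
  have hmem : ∀ i, g i ∈ t := fun i => Finset.mem_image_of_mem g (Finset.mem_univ i)
  let f : Fin n → Fin n := fun i => e.symm ⟨g i, hmem i⟩
  have hinj : Function.Injective f := by
    intro i j h
    exact hg (Subtype.mk_eq_mk.mp (e.symm.injective h))
  refine ⟨Equiv.ofBijective f (Finite.injective_iff_bijective.mp hinj), fun i j => ?_⟩
  show f i < f j ↔ _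
  simp only [f, OrderIso.lt_iff_lt, Subtype.mk_lt_mk]

lemma PermContains.inv {k n : ℕ} {σ : Equiv.Perm (Fin k)} {π : Equiv.Perm (Fin n)}
    (h : PermContains σ π) : PermContains σ⁻¹ π⁻¹ := by
  obtain ⟨f, hf, hiff⟩ := h
  refine ⟨fun a => π (f (σ⁻¹ a)), fun a b hab => ?_, fun a b => ?_⟩
  · exact (hiff _ _).mp (by simpa using hab)
  · simp only [Equiv.Perm.coe_inv, Equiv.symm_apply_apply]
    constructor
    · intro hab; simpa [Equiv.Perm.coe_inv, Equiv.symm_apply_apply] using hf hab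
    · intro hab
      have := hf.lt_iff_lt.mp (by simpa [Equiv.Perm.coe_inv, Equiv.symm_apply_apply] using hab)
      exact this

lemma key_count {n N : ℕ} (hn : 1 ≤ n) (π : Equiv.Perm (Fin N))
    (r s : Fin n → Fin N) (hr : StrictMono r) (hs : StrictMono s)
    (hrs : ∀ i j : Fin n, i < j → r i < s j) (hsr : ∀ i j : Fin n, i < j → s i < r j)
    (hlh : ∀ i j : Fin n, π (r i) < π (s j)) :
    2 ^ (n - 1) ≤ Nat.card {σ : Equiv.Perm (Fin n) | PermContains σ π} := by
  classical
  have hne : Nonempty (Fin n) := ⟨⟨0, hn⟩⟩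
  obtain ⟨a, ha⟩ := Finite.exists_max fun i => π (r i)
  -- choice of positions for each subset
  set c : Finset (Fin n) → Fin n → Fin N :=
    fun A i => if i ∈ insert a A then r i else s i with hc
  have hmono : ∀ A, StrictMono (c A) := by
    intro A i j hij
    simp only [hc]
    by_cases hi : i ∈ insert a A <;> by_cases hj : j ∈ insert a A <;>
      simp only [hi, hj, if_pos, if_neg, if_true, if_false]
    · exact hr hij
    · exact hrs i j hij
    · exact hsr i j hij
    · exact hs hij
  have hginj : ∀ A, Function.Injective (fun i => π (c A i)) :=
    fun A => π.injective.comp (hmono A).injective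
  choose Φ hΦ using fun A => exists_standardization (fun i => π (c A i)) (hginj A)
  have hpat : ∀ A, PermContains (Φ A) π := fun A => ⟨c A, hmono A, hΦ A⟩
  -- recovery of the subset from the pattern
  have hrec : ∀ A i, Φ A i ≤ Φ A a ↔ i ∈ insert a A := by
    intro A i
    have hca : c A a = r a := by simp only [hc]; rw [if_pos (Finset.mem_insert_self a A)]
    by_cases hi : i ∈ insert a A
    · have hci : c A i = r i := by simp only [hc]; rw [if_pos hi]
      have : ¬ (Φ A a < Φ A i) := by
        rw [hΦ A a i, hca, hci]
        exact not_lt.mpr (ha i)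
      simp [hi, not_lt.mp this]
    · have hci : c A i = s i := by simp only [hc]; rw [if_neg hi]
      have : Φ A a < Φ A i := by
        rw [hΦ A a i, hca, hci]; exact hlh a i
      simp [hi, not_le.mpr this]
  -- the injection
  let Ψ : Finset {x : Fin n // x ≠ a} → {σ : Equiv.Perm (Fin n) // PermContains σ π} :=
    fun A' => ⟨Φ (A'.image Subtype.val), hpat _⟩
  have hΨ : Function.Injective Ψ := by
    intro A' B' h
    have hΦeq : Φ (A'.image Subtype.val) = Φ (B'.image Subtype.val) :=
      Subtype.mk_eq_mk.mp h
    have hins : insert a (A'.image Subtype.val) = insert a (B'.image Subtype.val) := by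
      ext i
      rw [← hrec, ← hrec, hΦeq]
    ext x
    have hx : (x : Fin n) ≠ a := x.prop
    constructor
    · intro hxA
      have : (x : Fin n) ∈ insert a (A'.image Subtype.val) :=
        Finset.mem_insert_of_mem (Finset.mem_image_of_mem _ hxA)
      rw [hins] at this
      rcases Finset.mem_insert.mp this with h' | h'
      · exact absurd h' hx
      · obtain ⟨y, hy, hyx⟩ := Finset.mem_image.mp h'
        rwa [Subtype.ext hyx] at hy
    · intro hxB
      have : (x : Fin n) ∈ insert a (B'.image Subtype.val) :=
        Finset.mem_insert_of_mem (Finset.mem_image_of_mem _ hxB)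
      rw [← hins] at this
      rcases Finset.mem_insert.mp this with h' | h'
      · exact absurd h' hx
      · obtain ⟨y, hy, hyx⟩ := Finset.mem_image.mp h'
        rwa [Subtype.ext hyx] at hy
  have hcard : Nat.card (Finset {x : Fin n // x ≠ a}) = 2 ^ (n - 1) := by
    rw [Nat.card_eq_fintype_card, Fintype.card_finset]
    congr 1
    rw [Fintype.card_subtype_compl, Fintype.card_subtype_eq, Fintype.card_fin]
  calc 2 ^ (n - 1) = Nat.card (Finset {x : Fin n // x ≠ a}) := hcard.symm
    _ ≤ Nat.card {σ : Equiv.Perm (Fin n) // PermContains σ π} :=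
        Nat.card_le_card_of_injective Ψ hΨ
    _ = Nat.card {σ : Equiv.Perm (Fin n) | PermContains σ π} := rfl

lemma alt_count {n N : ℕ} (hn : 1 ≤ n) (π : Equiv.Perm (Fin N))
    (hv : IsVerticalAlternation π) (hN : 2 * n ≤ N) :
    2 ^ (n - 1) ≤ Nat.card {σ : Equiv.Perm (Fin n) | PermContains σ π} := by
  obtain ⟨⟨M, hM⟩, hbr⟩ := hv
  have hbound : ∀ i : Fin n, 2 * (i : ℕ) + 1 < N := by
    intro i; have := i.isLt; omega
  rcases hbr with hbr | hbr
  · -- even positions are low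
    refine key_count hn π (fun i => ⟨2 * i, by have := hbound i; omega⟩)
      (fun i => ⟨2 * i + 1, hbound i⟩) ?_ ?_ ?_ ?_ ?_
    · intro i j h
      have h' : (i : ℕ) < j := h
      simp only [Fin.mk_lt_mk]; omega
    · intro i j h
      have h' : (i : ℕ) < j := h
      simp only [Fin.mk_lt_mk]; omega
    · intro i j h
      have h' : (i : ℕ) < j := h
      simp only [Fin.mk_lt_mk]; omega
    · intro i j h
      have h' : (i : ℕ) < j := h
      simp only [Fin.mk_lt_mk]; omega
    · intro i j
      exact hbr _ _ (by simp [Nat.mul_mod_right]) (by show (2*(j:ℕ)+1)%2 = 1; omega)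
  · -- odd positions are low
    refine key_count hn π (fun i => ⟨2 * i + 1, hbound i⟩)
      (fun i => ⟨2 * i, by have := hbound i; omega⟩) ?_ ?_ ?_ ?_ ?_
    · intro i j h
      have h' : (i : ℕ) < j := h
      simp only [Fin.mk_lt_mk]; omega
    · intro i j h
      have h' : (i : ℕ) < j := h
      simp only [Fin.mk_lt_mk]; omega
    · intro i j h
      have h' : (i : ℕ) < j := h
      simp only [Fin.mk_lt_mk]; omega
    · intro i j h
      have h' : (i : ℕ) < j := h
      simp only [Fin.mk_lt_mk]; omega
    · intro i j
      exact hbr _ _ (by simp [Nat.mul_mod_right]) (by show (2*(i:ℕ)+1)%2 = 1; omega)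

/-- **Proposition.** If a permutation class contains arbitrarily long alternations
(vertical or horizontal), then `|C_n| ≥ 2^(n-1)` for all `n ≥ 1`. -/
theorem arbitrarily_long_alternations_not_small
    (C : ∀ n : ℕ, Set (Equiv.Perm (Fin n))) (hC : IsPermClass C)
    (halt : ContainsArbitrarilyLongAlternations C) :
    ∀ n : ℕ, 1 ≤ n → 2 ^ (n - 1) ≤ Nat.card (C n) := by
  intro n hn
  obtain ⟨N, π, hπC, hN, hA⟩ := halt (2 * n)
  have hsub : Nat.card {σ : Equiv.Perm (Fin n) | PermContains σ π} ≤ Nat.card (C n) :=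
    Nat.card_mono (Set.toFinite _) (fun σ hσ => hC n N σ π hπC hσ)
  rcases hA with hv | hv
  · exact le_trans (alt_count hn π hv hN) hsub
  · have h1 : 2 ^ (n - 1) ≤ Nat.card {σ : Equiv.Perm (Fin n) | PermContains σ π⁻¹} :=
      alt_count hn π⁻¹ hv hN
    have h2 : Nat.card {σ : Equiv.Perm (Fin n) | PermContains σ π⁻¹}
        ≤ Nat.card {σ : Equiv.Perm (Fin n) | PermContains σ π} := by
      apply Nat.card_le_card_of_injective
        (f := fun τ : {σ : Equiv.Perm (Fin n) | PermContains σ π⁻¹} =>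
          (⟨τ.1⁻¹, by simpa using τ.2.inv⟩ : {σ : Equiv.Perm (Fin n) | PermContains σ π}))
      intro τ τ' h
      exact Subtype.ext (inv_injective (Subtype.mk_eq_mk.mp h))
    exact le_trans h1 (le_trans h2 hsub)
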